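/- Let G be a connected finite simple graph on n vertices with even diameter d, let P = v_1 ∼ v_2 ∼ ⋯ ∼ v_{d+1} be a diameter path of G, and suppose η(G) = n − d − 1. If a vertex z not on P has exactly three neighbors on P, then these neighbors are three consecutive vertices v_m, v_{m+1}, v_{m+2} of P with m odd. -/

import Mathlib

open Classical in
/-- The adjacency matrix of a finite simple graph over `ℝ`. -/
noncomputable def adjMat {V : Type} [Fintype V] (G : SimpleGraph V) : Matrix V V ℝ :=
  Matrix.of fun i j => if G.Adj i j then (1 : ℝ) else 0

/-- The nullity `η(G)` of a finite simple graph: the dimension of the kernel of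
its adjacency matrix over `ℝ`. -/
noncomputable def nullity {V : Type} [Fintype V] (G : SimpleGraph V) : ℕ :=
  Module.finrank ℝ (LinearMap.ker (adjMat G).mulVecLin)

lemma aux_dist_le {V : Type} (G : SimpleGraph V) (hG : G.Connected) {d : ℕ} (p : Fin (d+1) → V)
    (hadj : ∀ i : Fin d, G.Adj (p i.castSucc) (p i.succ)) :
    ∀ (k : ℕ) (i j : Fin (d+1)), (i : ℕ) + k = (j : ℕ) → G.dist (p i) (p j) ≤ k := by
  intro k
  induction k with
  | zero =>
    intro i j h
    have : i = j := by ext; omega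
    subst this; simp
  | succ k ih =>
    intro i j h
    have hj := j.isLt
    have hlt : (i : ℕ) + k < d := by omega
    set j' : Fin (d+1) := ⟨(i : ℕ) + k, by omega⟩ with hj'
    have hadj' : G.Adj (p j') (p j) := by
      have := hadj ⟨(i : ℕ) + k, hlt⟩
      have e1 : (⟨(i : ℕ) + k, hlt⟩ : Fin d).castSucc = j' := by ext; simp [hj']
      have e2 : (⟨(i : ℕ) + k, hlt⟩ : Fin d).succ = j := by ext; simp [Fin.succ]; omega
      rwa [e1, e2] at this
    have h1 : G.dist (p j') (p j) = 1 := SimpleGraph.dist_eq_one_iff_adj.mpr hadj'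
    have h2 := ih i j' (by simp [hj'])
    have h3 := hG.dist_triangle (u := p i) (v := p j') (w := p j)
    omega

lemma aux_dist {V : Type} (G : SimpleGraph V) (hG : G.Connected) {d : ℕ} (p : Fin (d+1) → V)
    (hadj : ∀ i : Fin d, G.Adj (p i.castSucc) (p i.succ))
    (hdist : G.dist (p 0) (p (Fin.last d)) = d) :
    ∀ i j : Fin (d+1), (i : ℕ) ≤ (j : ℕ) → G.dist (p i) (p j) = (j : ℕ) - (i : ℕ) := by
  intro i j hij
  have hi := i.isLt
  have hj := j.isLt
  have h1 : G.dist (p 0) (p i) ≤ (i : ℕ) := aux_dist_le G hG p hadj _ 0 i (by simp)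
  have h2 : G.dist (p i) (p j) ≤ (j : ℕ) - (i : ℕ) := aux_dist_le G hG p hadj _ i j (by omega)
  have h3 : G.dist (p j) (p (Fin.last d)) ≤ d - (j : ℕ) :=
    aux_dist_le G hG p hadj _ j (Fin.last d) (by simp [Fin.last]; omega)
  have h4 : G.dist (p 0) (p (Fin.last d)) ≤
      G.dist (p 0) (p j) + G.dist (p j) (p (Fin.last d)) := hG.dist_triangle
  have h5 : G.dist (p 0) (p j) ≤ G.dist (p 0) (p i) + G.dist (p i) (p j) := hG.dist_triangle
  omega

lemma adjMat_apply {V : Type} [Fintype V] (G : SimpleGraph V) [DecidableRel G.Adj] (x y : V) :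
    adjMat G x y = if G.Adj x y then (1 : ℝ) else 0 := by
  unfold adjMat
  simp only [Matrix.of_apply]
  congr 1

set_option maxHeartbeats 1000000 in
open Matrix in
lemma key {V : Type} [Fintype V] (G : SimpleGraph V) [DecidableRel G.Adj]
    {d m : ℕ} (heven : Even d) (hm : Odd m) (hm2 : m + 2 ≤ d)
    (p : Fin (d+1) → V) (z : V)
    (hinj : Function.Injective p) (hz : z ∉ Set.range p)
    (hpa : ∀ i j : Fin (d+1), G.Adj (p i) (p j) ↔ ((j:ℕ) = (i:ℕ)+1 ∨ (i:ℕ) = (j:ℕ)+1))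
    (hS : ∀ i : Fin (d+1), G.Adj z (p i) ↔ ((i:ℕ) = m ∨ (i:ℕ) = m+1 ∨ (i:ℕ) = m+2))
    (hnull : nullity G = Fintype.card V - d - 1) : False := by
  classical
  have hdmod : d % 2 = 0 := Nat.even_iff.mp heven
  have hmmod : m % 2 = 1 := Nat.odd_iff.mp hm
  -- the embedding of the path plus z
  set e : Fin (d+2) → V := fun i => if h : (i : ℕ) < d + 1 then p ⟨(i:ℕ), h⟩ else z with he
  have heinj : Function.Injective e := by
    intro i j hij
    by_cases hi : (i:ℕ) < d+1 <;> by_cases hj : (j:ℕ) < d+1 <;>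
      simp only [he, hi, hj, dite_true, dite_false] at hij
    · have := hinj hij
      ext
      simpa [Fin.ext_iff] using this
    · exact absurd ⟨_, hij⟩ hz
    · exact absurd ⟨_, hij.symm⟩ hz
    · ext
      have := i.isLt; have := j.isLt
      omega
  -- adjacency characterization
  have hAdj : ∀ i j : Fin (d+2), G.Adj (e i) (e j) ↔
      (((i:ℕ) < d+1 ∧ (j:ℕ) < d+1 ∧ ((j:ℕ) = (i:ℕ)+1 ∨ (i:ℕ) = (j:ℕ)+1))
      ∨ ((i:ℕ) < d+1 ∧ (j:ℕ) = d+1 ∧ ((i:ℕ) = m ∨ (i:ℕ) = m+1 ∨ (i:ℕ) = m+2))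
      ∨ ((i:ℕ) = d+1 ∧ (j:ℕ) < d+1 ∧ ((j:ℕ) = m ∨ (j:ℕ) = m+1 ∨ (j:ℕ) = m+2))) := by
    intro i j
    have hi2 := i.isLt; have hj2 := j.isLt
    by_cases hi : (i:ℕ) < d+1 <;> by_cases hj : (j:ℕ) < d+1
    · rw [show e i = p ⟨(i:ℕ), hi⟩ from by simp only [he, hi, dite_true, dite_false],
        show e j = p ⟨(j:ℕ), hj⟩ from by simp only [he, hj, dite_true, dite_false], hpa]
      simp only [Fin.val_mk]
      omega
    · rw [show e i = p ⟨(i:ℕ), hi⟩ from by simp only [he, hi, dite_true, dite_false],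
        show e j = z from by simp only [he, hj, dite_true, dite_false], SimpleGraph.adj_comm, hS]
      simp only [Fin.val_mk]
      omega
    · rw [show e i = z from by simp only [he, hi, dite_true, dite_false],
        show e j = p ⟨(j:ℕ), hj⟩ from by simp only [he, hj, dite_true, dite_false], hS]
      simp only [Fin.val_mk]
      omega
    · rw [show e i = z from by simp only [he, hi, dite_true, dite_false], show e j = z from by simp only [he, hj, dite_true, dite_false]]
      constructor
      · intro h
        exact (G.irrefl h).elim
      · intro h
        exfalso
        omega
  -- the (d+2) × (d+2) principal submatrix
  set N : Matrix (Fin (d+2)) (Fin (d+2)) ℝ :=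
    Matrix.of fun i j => adjMat G (e i) (e j) with hN
  have hrow : ∀ (i : Fin (d+2)) (w : Fin (d+2) → ℝ),
      N.mulVec w i = ∑ j ∈ Finset.univ.filter (fun j => G.Adj (e i) (e j)), w j := by
    intro i w
    rw [Finset.sum_filter]
    show (∑ j, N i j * w j) = _
    refine Finset.sum_congr rfl fun j _ => ?_
    by_cases h : G.Adj (e i) (e j) <;> simp [hN, adjMat_apply, h]
  -- the filter of the z-row
  have hfilz : ∀ i : Fin (d+2), (i:ℕ) = d+1 →
      Finset.univ.filter (fun j => G.Adj (e i) (e j)) =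
      {⟨m, by omega⟩, ⟨m+1, by omega⟩, ⟨m+2, by omega⟩} := by
    intro i hi
    ext j
    simp only [Finset.mem_filter, Finset.mem_univ, true_and, Finset.mem_insert,
      Finset.mem_singleton, hAdj, Fin.ext_iff, Fin.val_mk]
    have := j.isLt
    omega
  -- test vector u
  set u : Fin (d+2) → ℝ := fun i => if (i:ℕ) % 2 = 0 then (-1:ℝ)^((i:ℕ)/2) else 0 with hu
  set c : ℝ := (-1:ℝ)^((m+1)/2) with hc
  have hcne : c ≠ 0 := pow_ne_zero _ (by norm_num)
  have hNu : N.mulVec u = fun i : Fin (d+2) => if (i:ℕ) = d+1 then c else 0 := by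
    funext i
    rw [hrow]
    have hi2 := i.isLt
    by_cases hiz : (i:ℕ) = d+1
    · rw [hfilz i hiz, if_pos hiz]
      rw [Finset.sum_insert (by simp [Fin.ext_iff]), Finset.sum_insert (by simp [Fin.ext_iff]),
        Finset.sum_singleton]
      have e1 : u ⟨m, by omega⟩ = 0 := by simp only [hu, Fin.val_mk]; rw [if_neg]; omega
      have e2 : u ⟨m+2, by omega⟩ = 0 := by simp only [hu, Fin.val_mk]; rw [if_neg]; omega
      have e3 : u ⟨m+1, by omega⟩ = c := by
        simp only [hu, Fin.val_mk, hc]; rw [if_pos]; omega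
      rw [e1, e2, e3]; ring
    · rw [if_neg hiz]
      by_cases hpar : (i:ℕ) % 2 = 0
      · apply Finset.sum_eq_zero
        intro j hj
        have hadj := (Finset.mem_filter.mp hj).2
        rw [hAdj] at hadj
        simp only [hu]
        rw [if_neg]
        omega
      · -- odd path row
        have hk1 : 1 ≤ (i:ℕ) := by omega
        have hkd : (i:ℕ) + 1 ≤ d := by omega
        have hpairne : (⟨(i:ℕ)-1, by omega⟩ : Fin (d+2)) ≠ ⟨(i:ℕ)+1, by omega⟩ := by
          simp only [ne_eq, Fin.mk.injEq]
          omega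
        have hsub : ({⟨(i:ℕ)-1, by omega⟩, ⟨(i:ℕ)+1, by omega⟩} : Finset (Fin (d+2))) ⊆
            Finset.univ.filter (fun j => G.Adj (e i) (e j)) := by
          intro j hj
          simp only [Finset.mem_insert, Finset.mem_singleton] at hj
          refine Finset.mem_filter.mpr ⟨Finset.mem_univ _, ?_⟩
          rw [hAdj]
          rcases hj with h | h <;> subst h <;>
            simp only [Fin.val_mk, eq_self_iff_true, true_or, or_true, true_and, and_true] <;>
            omega
        have hout : ∀ j ∈ Finset.univ.filter (fun j => G.Adj (e i) (e j)),
            j ∉ ({⟨(i:ℕ)-1, by omega⟩, ⟨(i:ℕ)+1, by omega⟩} : Finset (Fin (d+2))) → u j = 0 := by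
          intro j hj hnotin
          have hadj := (Finset.mem_filter.mp hj).2
          rw [hAdj] at hadj
          simp only [Finset.mem_insert, Finset.mem_singleton, Fin.ext_iff, Fin.val_mk] at hnotin
          simp only [hu]
          rw [if_neg]
          omega
        rw [← Finset.sum_subset hsub hout, Finset.sum_pair hpairne]
        have e1 : u ⟨(i:ℕ)-1, by omega⟩ = (-1:ℝ)^(((i:ℕ)-1)/2) := by
          simp only [hu, Fin.val_mk]; rw [if_pos]; omega
        have e2 : u ⟨(i:ℕ)+1, by omega⟩ = (-1:ℝ)^(((i:ℕ)-1)/2 + 1) := by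
          simp only [hu, Fin.val_mk]
          rw [if_pos (by omega), show ((i:ℕ)+1)/2 = ((i:ℕ)-1)/2 + 1 from by omega]
        rw [e1, e2, pow_succ]
        ring
  -- kernel of N is trivial
  have hker : ∀ w : Fin (d+2) → ℝ, N.mulVec w = 0 → w = 0 := by
    intro w hw
    have hsymm : Nᵀ = N := by
      ext i j
      simp only [Matrix.transpose_apply, hN, Matrix.of_apply, adjMat_apply]
      by_cases h : G.Adj (e i) (e j)
      · rw [if_pos h, if_pos h.symm]
      · rw [if_neg (fun hh => h (SimpleGraph.Adj.symm hh)), if_neg h]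
    have hwz : w ⟨d+1, by omega⟩ = 0 := by
      have h1 : u ⬝ᵥ (N.mulVec w) = 0 := by rw [hw]; simp
      rw [Matrix.dotProduct_mulVec, ← Matrix.mulVec_transpose, hsymm, hNu] at h1
      have h2 : (fun i : Fin (d+2) => if (i:ℕ) = d+1 then c else 0) ⬝ᵥ w
          = c * w ⟨d+1, by omega⟩ := by
        unfold dotProduct
        rw [Finset.sum_eq_single (⟨d+1, by omega⟩ : Fin (d+2))]
        · simp
        · intro b _ hb
          have hbne : ((b : Fin (d+2)) : ℕ) ≠ d+1 := by simpa [Fin.ext_iff] using hb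
          simp [hbne]
        · simp
      rw [h2] at h1
      exact (mul_eq_zero.mp h1).resolve_left hcne
    -- z-row equation
    have hzrow : w ⟨m, by omega⟩ + w ⟨m+1, by omega⟩ + w ⟨m+2, by omega⟩ = 0 := by
      have := congrFun hw ⟨d+1, by omega⟩
      rw [hrow, hfilz ⟨d+1, by omega⟩ rfl] at this
      rw [Finset.sum_insert (by simp [Fin.ext_iff]), Finset.sum_insert (by simp [Fin.ext_iff]),
        Finset.sum_singleton] at this
      simpa [add_assoc] using this
    -- path row recurrences
    have hrec : ∀ k, ∀ _hk : k + 2 ≤ d, w ⟨k, by omega⟩ + w ⟨k+2, by omega⟩ = 0 := by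
      intro k hk
      have hrowk := congrFun hw ⟨k+1, by omega⟩
      rw [hrow] at hrowk
      have hpairne : (⟨k, by omega⟩ : Fin (d+2)) ≠ ⟨k+2, by omega⟩ := by
        simp [Fin.ext_iff]
      have hsub : ({⟨k, by omega⟩, ⟨k+2, by omega⟩} : Finset (Fin (d+2))) ⊆
          Finset.univ.filter (fun j => G.Adj (e ⟨k+1, by omega⟩) (e j)) := by
        intro j hj
        simp only [Finset.mem_insert, Finset.mem_singleton] at hj
        refine Finset.mem_filter.mpr ⟨Finset.mem_univ _, ?_⟩
        rw [hAdj]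
        rcases hj with h | h <;> subst h <;>
          simp only [Fin.val_mk, eq_self_iff_true, true_or, or_true, true_and, and_true] <;>
          omega
      have hout : ∀ j ∈ Finset.univ.filter (fun j => G.Adj (e ⟨k+1, by omega⟩) (e j)),
          j ∉ ({⟨k, by omega⟩, ⟨k+2, by omega⟩} : Finset (Fin (d+2))) → w j = 0 := by
        intro j hj hnotin
        have hadj := (Finset.mem_filter.mp hj).2
        rw [hAdj] at hadj
        simp only [Finset.mem_insert, Finset.mem_singleton, Fin.ext_iff, Fin.val_mk] at hnotin
        have hjval : (j:ℕ) = d+1 := by simp only [Fin.val_mk] at hadj; omega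
        have : j = ⟨d+1, by omega⟩ := Fin.ext hjval
        rw [this]
        exact hwz
      rw [← Finset.sum_subset hsub hout, Finset.sum_pair hpairne] at hrowk
      exact hrowk
    -- row 0 : w 1 = 0
    have h1zero : w ⟨1, by omega⟩ = 0 := by
      have hrow0 := congrFun hw ⟨0, by omega⟩
      rw [hrow] at hrow0
      have hfil0 : Finset.univ.filter (fun j => G.Adj (e ⟨0, by omega⟩) (e j)) =
          {⟨1, by omega⟩} := by
        ext j
        simp only [Finset.mem_filter, Finset.mem_univ, true_and, Finset.mem_singleton,
          hAdj, Fin.ext_iff, Fin.val_mk]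
        have := j.isLt
        omega
      rw [hfil0, Finset.sum_singleton] at hrow0
      exact hrow0
    -- all odd-index entries vanish
    have hodd : ∀ t, ∀ _ht : 2*t+1 ≤ d, w ⟨2*t+1, by omega⟩ = 0 := by
      intro t
      induction t with
      | zero => intro _; simpa using h1zero
      | succ t ih =>
        intro ht
        have h1 := hrec (2*t+1) (by omega)
        have h2 := ih (by omega)
        have e1 : (⟨2*(t+1)+1, by omega⟩ : Fin (d+2)) = ⟨2*t+1+2, by omega⟩ := by
          simp only [Fin.ext_iff, Fin.val_mk]; omega
        rw [e1]
        rw [h2] at h1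
        linarith
    -- all even-index entries are ± w 0
    have heq : ∀ t, ∀ _ht : 2*t ≤ d, w ⟨2*t, by omega⟩ = (-1:ℝ)^t * w ⟨0, by omega⟩ := by
      intro t
      induction t with
      | zero => intro _; simp
      | succ t ih =>
        intro ht
        have h1 := hrec (2*t) (by omega)
        have h2 := ih (by omega)
        have e1 : (⟨2*(t+1), by omega⟩ : Fin (d+2)) = ⟨2*t+2, by omega⟩ := by
          simp only [Fin.ext_iff, Fin.val_mk]; omega
        rw [e1, pow_succ]
        rw [h2] at h1
        linarith
    -- conclude w 0 = 0
    obtain ⟨s, hs⟩ := hm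
    have hwm : w ⟨m, by omega⟩ = 0 := by
      have := hodd s (by omega)
      have e1 : (⟨m, by omega⟩ : Fin (d+2)) = ⟨2*s+1, by omega⟩ := by simp only [Fin.ext_iff, Fin.val_mk]; omega
      rw [e1]; exact this
    have hwm2 : w ⟨m+2, by omega⟩ = 0 := by
      have := hodd (s+1) (by omega)
      have e1 : (⟨m+2, by omega⟩ : Fin (d+2)) = ⟨2*(s+1)+1, by omega⟩ := by
        simp only [Fin.ext_iff, Fin.val_mk]; omega
      rw [e1]; exact this
    have hwm1 : w ⟨m+1, by omega⟩ = (-1:ℝ)^(s+1) * w ⟨0, by omega⟩ := by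
      have := heq (s+1) (by omega)
      have e1 : (⟨m+1, by omega⟩ : Fin (d+2)) = ⟨2*(s+1), by omega⟩ := by
        simp only [Fin.ext_iff, Fin.val_mk]; omega
      rw [e1]; exact this
    have hw0 : w ⟨0, by omega⟩ = 0 := by
      rw [hwm, hwm2, hwm1] at hzrow
      have hne : ((-1:ℝ)^(s+1)) ≠ 0 := pow_ne_zero _ (by norm_num)
      have : (-1:ℝ)^(s+1) * w ⟨0, by omega⟩ = 0 := by linarith
      exact (mul_eq_zero.mp this).resolve_left hne
    -- conclude w = 0
    funext j
    have hj2 := j.isLt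
    by_cases hjz : (j:ℕ) = d+1
    · have : j = ⟨d+1, by omega⟩ := Fin.ext hjz
      rw [this]; exact hwz
    · by_cases hjp : (j:ℕ) % 2 = 0
      · have e1 : j = ⟨2*((j:ℕ)/2), by omega⟩ := by simp only [Fin.ext_iff, Fin.val_mk]; omega
        rw [e1]
        have := heq ((j:ℕ)/2) (by omega)
        rw [hw0, mul_zero] at this
        simpa using this
      · have e1 : j = ⟨2*((j:ℕ)/2)+1, by omega⟩ := by simp only [Fin.ext_iff, Fin.val_mk]; omega
        rw [e1]
        exact hodd ((j:ℕ)/2) (by omega)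
  -- rank considerations
  have hcard : d + 2 ≤ Fintype.card V := by
    have := Fintype.card_le_of_injective e heinj
    simpa using this
  have hrank : Module.finrank ℝ (LinearMap.range (adjMat G).mulVecLin) = d + 1 := by
    have hrn := LinearMap.finrank_range_add_finrank_ker (adjMat G).mulVecLin
    rw [Module.finrank_fintype_fun_eq_card] at hrn
    unfold nullity at hnull
    omega
  set col : Fin (d+2) → (V → ℝ) := fun j x => adjMat G x (e j) with hcol
  have hcolmem : ∀ j, col j ∈ LinearMap.range (adjMat G).mulVecLin := by
    intro j
    refine ⟨Pi.single (e j) 1, ?_⟩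
    funext x
    simp [Matrix.mulVecLin_apply, Matrix.mulVec_single, hcol]
  have hli : LinearIndependent ℝ col := by
    rw [Fintype.linearIndependent_iff]
    intro g hg j
    have hNg : N.mulVec g = 0 := by
      funext i
      have hgi := congrFun hg (e i)
      simp only [Finset.sum_apply, Pi.smul_apply, smul_eq_mul, hcol, Pi.zero_apply] at hgi
      rw [Matrix.mulVec]
      unfold dotProduct
      simp only [hN, Matrix.of_apply, Pi.zero_apply]
      rw [← hgi]
      exact Finset.sum_congr rfl fun x _ => mul_comm _ _
    exact congrFun (hker g hNg) j
  have hfin : Module.finrank ℝ (Submodule.span ℝ (Set.range col)) = d + 2 := by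
    rw [finrank_span_eq_card hli]
    simp
  have hle : Submodule.span ℝ (Set.range col) ≤ LinearMap.range (adjMat G).mulVecLin :=
    Submodule.span_le.mpr (Set.range_subset_iff.mpr hcolmem)
  have := Submodule.finrank_mono hle
  omega

/-- Let `G` be connected with even diameter `d`, let `p 0 ∼ ⋯ ∼ p d` be a diameter
path (so `p i` is the vertex `v_{i+1}` in 1-indexed notation), and suppose
`η(G) = n - d - 1`. If a vertex `z` not on the path has exactly three neighbours on
the path, then they are three consecutive vertices `p m, p (m+1), p (m+2)`
(i.e. `v_{m+1}, v_{m+2}, v_{m+3}`) whose first 1-indexed position `m + 1` is odd. -/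
theorem stmt16 {V : Type} [Fintype V] (G : SimpleGraph V) [DecidableRel G.Adj]
    (hG : G.Connected) (heven : Even G.diam)
    (p : Fin (G.diam + 1) → V)
    (hadj : ∀ i : Fin G.diam, G.Adj (p i.castSucc) (p i.succ))
    (hdist : G.dist (p 0) (p (Fin.last G.diam)) = G.diam)
    (hnull : nullity G = Fintype.card V - G.diam - 1)
    (z : V) (hz : z ∉ Set.range p)
    (h3 : (Finset.univ.filter fun i : Fin (G.diam + 1) => G.Adj z (p i)).card = 3) :
    ∃ m : ℕ, Odd (m + 1) ∧ m + 2 ≤ G.diam ∧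
      ∀ i : Fin (G.diam + 1), G.Adj z (p i) ↔
        ((i : ℕ) = m ∨ (i : ℕ) = m + 1 ∨ (i : ℕ) = m + 2) := by
  have hdd := aux_dist G hG p hadj hdist
  have hinj : Function.Injective p := by
    intro i j h
    rcases le_total (i : ℕ) (j : ℕ) with h' | h'
    · have := hdd i j h'; rw [h, SimpleGraph.dist_self] at this; ext; omega
    · have := hdd j i h'; rw [h, SimpleGraph.dist_self] at this; ext; omega
  have hpa : ∀ i j : Fin (G.diam + 1), G.Adj (p i) (p j) ↔
      ((j:ℕ) = (i:ℕ)+1 ∨ (i:ℕ) = (j:ℕ)+1) := by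
    intro i j
    constructor
    · intro h
      have h1 : G.dist (p i) (p j) = 1 := SimpleGraph.dist_eq_one_iff_adj.mpr h
      rcases le_total (i : ℕ) (j : ℕ) with h' | h'
      · have := hdd i j h'; omega
      · have := hdd j i h'; rw [SimpleGraph.dist_comm] at this; omega
    · intro h
      rcases h with h | h
      · have hlt : (i : ℕ) < G.diam := by have := j.isLt; omega
        have := hadj ⟨(i:ℕ), hlt⟩
        have e1 : (⟨(i:ℕ), hlt⟩ : Fin G.diam).castSucc = i := by ext; simp
        have e2 : (⟨(i:ℕ), hlt⟩ : Fin G.diam).succ = j := by ext; simp [Fin.succ]; omega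
        rwa [e1, e2] at this
      · have hlt : (j : ℕ) < G.diam := by have := i.isLt; omega
        have := hadj ⟨(j:ℕ), hlt⟩
        have e1 : (⟨(j:ℕ), hlt⟩ : Fin G.diam).castSucc = j := by ext; simp
        have e2 : (⟨(j:ℕ), hlt⟩ : Fin G.diam).succ = i := by ext; simp [Fin.succ]; omega
        rw [e1, e2] at this
        exact this.symm
  have hwin : ∀ i j : Fin (G.diam + 1), G.Adj z (p i) → G.Adj z (p j) →
      (j : ℕ) ≤ (i : ℕ) + 2 := by
    intro i j hi hj
    rcases le_total (j : ℕ) (i : ℕ) with h' | h'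
    · omega
    · have h1 : G.dist (p i) (p j) = (j:ℕ) - (i:ℕ) := hdd i j h'
      have h2 : G.dist (p i) z = 1 := by
        rw [SimpleGraph.dist_comm]; exact SimpleGraph.dist_eq_one_iff_adj.mpr hi
      have h3 : G.dist z (p j) = 1 := SimpleGraph.dist_eq_one_iff_adj.mpr hj
      have h4 : G.dist (p i) (p j) ≤ G.dist (p i) z + G.dist z (p j) := hG.dist_triangle
      omega
  rw [Finset.card_eq_three] at h3
  obtain ⟨a, b, c, hab, hac, hbc, hset⟩ := h3
  have hmem : ∀ i : Fin (G.diam + 1), G.Adj z (p i) ↔ (i = a ∨ i = b ∨ i = c) := by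
    intro i
    constructor
    · intro h
      have : i ∈ Finset.univ.filter fun i : Fin (G.diam + 1) => G.Adj z (p i) :=
        Finset.mem_filter.mpr ⟨Finset.mem_univ _, h⟩
      rw [hset] at this
      simpa using this
    · intro h
      have : i ∈ ({a, b, c} : Finset (Fin (G.diam + 1))) := by simpa using h
      rw [← hset] at this
      exact (Finset.mem_filter.mp this).2
  have ha : G.Adj z (p a) := (hmem a).mpr (Or.inl rfl)
  have hb : G.Adj z (p b) := (hmem b).mpr (Or.inr (Or.inl rfl))
  have hc : G.Adj z (p c) := (hmem c).mpr (Or.inr (Or.inr rfl))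
  have hab' : (a : ℕ) ≠ (b : ℕ) := fun h => hab (Fin.ext h)
  have hac' : (a : ℕ) ≠ (c : ℕ) := fun h => hac (Fin.ext h)
  have hbc' : (b : ℕ) ≠ (c : ℕ) := fun h => hbc (Fin.ext h)
  have w1 := hwin a b ha hb
  have w2 := hwin b a hb ha
  have w3 := hwin a c ha hc
  have w4 := hwin c a hc ha
  have w5 := hwin b c hb hc
  have w6 := hwin c b hc hb
  set m : ℕ := min (min (a : ℕ) (b : ℕ)) (c : ℕ) with hm
  have hS : ∀ i : Fin (G.diam + 1), G.Adj z (p i) ↔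
      ((i:ℕ) = m ∨ (i:ℕ) = m+1 ∨ (i:ℕ) = m+2) := by
    intro i
    rw [hmem i]
    constructor
    · intro h
      have : (i:ℕ) = (a:ℕ) ∨ (i:ℕ) = (b:ℕ) ∨ (i:ℕ) = (c:ℕ) := by
        rcases h with h | h | h <;> subst h <;> simp
      omega
    · intro h
      have : (i:ℕ) = (a:ℕ) ∨ (i:ℕ) = (b:ℕ) ∨ (i:ℕ) = (c:ℕ) := by omega
      rcases this with h' | h' | h'
      · exact Or.inl (Fin.ext h')
      · exact Or.inr (Or.inl (Fin.ext h'))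
      · exact Or.inr (Or.inr (Fin.ext h'))
  have hm2 : m + 2 ≤ G.diam := by
    have := a.isLt; have := b.isLt; have := c.isLt
    omega
  refine ⟨m, ?_, hm2, hS⟩
  by_contra hodd
  rw [Nat.not_odd_iff_even] at hodd
  have hmOdd : Odd m := by
    rcases Nat.even_or_odd m with h | h
    · exfalso
      rw [Nat.even_add_one] at hodd
      exact hodd (by simpa using h)
    · exact h
  exact key G heven hmOdd hm2 p z hinj hz hpa hS hnull
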